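/- Let n ≥ 2, let K ⊆ ℝⁿ be a proper subdual cone, let A ∈ ℝ^{n×n} be symmetric, and let {v¹, …, vⁿ} be an orthonormal system of eigenvectors of A with A vⁱ = λᵢ vⁱ and λ₁ < λ₂ ≤ ⋯ ≤ λₙ. If v¹ ∈ K*, then the sublevel set [φ_A ≤ c] = {x ∈ int(K) : ⟨Ax, x⟩ ≤ c‖x‖²} is convex for every c ∉ (λ₂, λₙ). -/

import Mathlib

open scoped RealInnerProductSpace

/-- The quadratic form `x ↦ ⟨A x, x⟩` associated with a matrix `A`. -/
noncomputable def quadForm {n : ℕ} (A : Matrix (Fin n) (Fin n) ℝ)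
    (x : EuclideanSpace ℝ (Fin n)) : ℝ :=
  ⟪Matrix.toEuclideanLin A x, x⟫

/-- `K` is a cone: closed under multiplication by positive scalars. -/
def IsCone {n : ℕ} (K : Set (EuclideanSpace ℝ (Fin n))) : Prop :=
  ∀ ⦃t : ℝ⦄, 0 < t → ∀ ⦃x⦄, x ∈ K → t • x ∈ K

/-- A proper cone: a pointed closed convex cone with nonempty interior. -/
def IsProperCone {n : ℕ} (K : Set (EuclideanSpace ℝ (Fin n))) : Prop :=
  IsCone K ∧ Convex ℝ K ∧ IsClosed K ∧ K ∩ (-K) ⊆ {0} ∧ (interior K).Nonempty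

/-- The dual cone `K* = {u : ⟨u, y⟩ ≥ 0 for all y ∈ K}`. -/
def dualCone {n : ℕ} (K : Set (EuclideanSpace ℝ (Fin n))) : Set (EuclideanSpace ℝ (Fin n)) :=
  {u | ∀ y ∈ K, 0 ≤ ⟪u, y⟫}

/-- The sublevel set `[φ_A ≤ c] = {x ∈ int K : ⟨A x, x⟩ ≤ c ‖x‖²}`. -/
noncomputable def sublevel {n : ℕ} (A : Matrix (Fin n) (Fin n) ℝ)
    (K : Set (EuclideanSpace ℝ (Fin n))) (c : ℝ) : Set (EuclideanSpace ℝ (Fin n)) :=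
  {x ∈ interior K | quadForm A x ≤ c * ‖x‖ ^ 2}

lemma socAux {ι : Type*} (s : Finset ι) (w f g : ι → ℝ) (hw : ∀ i ∈ s, 0 ≤ w i)
    (α p q a a' : ℝ) (hp : 0 ≤ p) (hq : 0 ≤ q) (ha : 0 ≤ a) (ha' : 0 ≤ a')
    (hx : ∑ i ∈ s, w i * f i ^ 2 ≤ α * p ^ 2)
    (hy : ∑ i ∈ s, w i * g i ^ 2 ≤ α * q ^ 2) :
    ∑ i ∈ s, w i * (a * f i + a' * g i) ^ 2 ≤ α * (a * p + a' * q) ^ 2 := by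
  set Gx := ∑ i ∈ s, w i * f i ^ 2 with hGxd
  set Gy := ∑ i ∈ s, w i * g i ^ 2 with hGyd
  set H := ∑ i ∈ s, w i * (f i * g i) with hHd
  have hGx0 : 0 ≤ Gx := Finset.sum_nonneg fun i hi => mul_nonneg (hw i hi) (sq_nonneg _)
  have hGy0 : 0 ≤ Gy := Finset.sum_nonneg fun i hi => mul_nonneg (hw i hi) (sq_nonneg _)
  have hCS : H ^ 2 ≤ Gx * Gy := by
    have h := Finset.sum_mul_sq_le_sq_mul_sq s
      (fun i => Real.sqrt (w i) * f i) (fun i => Real.sqrt (w i) * g i)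
    have e1 : ∑ i ∈ s, (Real.sqrt (w i) * f i) * (Real.sqrt (w i) * g i) = H :=
      Finset.sum_congr rfl fun i hi => by
        rw [show (Real.sqrt (w i) * f i) * (Real.sqrt (w i) * g i)
            = (Real.sqrt (w i) * Real.sqrt (w i)) * (f i * g i) by ring,
          Real.mul_self_sqrt (hw i hi)]
    have e2 : ∑ i ∈ s, (Real.sqrt (w i) * f i) ^ 2 = Gx :=
      Finset.sum_congr rfl fun i hi => by
        rw [mul_pow, Real.sq_sqrt (hw i hi)]
    have e3 : ∑ i ∈ s, (Real.sqrt (w i) * g i) ^ 2 = Gy :=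
      Finset.sum_congr rfl fun i hi => by
        rw [mul_pow, Real.sq_sqrt (hw i hi)]
    rwa [e1, e2, e3] at h
  have h1 : Gx * Gy ≤ (α * p ^ 2) * (α * q ^ 2) :=
    mul_le_mul hx hy hGy0 (le_trans hGx0 hx)
  have h2 : H ^ 2 ≤ (α * p * q) ^ 2 := by nlinarith [hCS, h1]
  have h3 : 0 ≤ α * p * q := by
    rcases eq_or_lt_of_le hp with h | h
    · simp [← h]
    · have hα : 0 ≤ α := by nlinarith [le_trans hGx0 hx, mul_pos h h]
      exact mul_nonneg (mul_nonneg hα h.le) hq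
  have hH : H ≤ α * p * q :=
    calc H ≤ |H| := le_abs_self H
      _ = Real.sqrt (H ^ 2) := (Real.sqrt_sq_eq_abs H).symm
      _ ≤ Real.sqrt ((α * p * q) ^ 2) := Real.sqrt_le_sqrt h2
      _ = α * p * q := by rw [Real.sqrt_sq h3]
  have hexp : ∑ i ∈ s, w i * (a * f i + a' * g i) ^ 2
      = a ^ 2 * Gx + 2 * a * a' * H + a' ^ 2 * Gy := by
    rw [hGxd, hGyd, hHd, Finset.mul_sum, Finset.mul_sum, Finset.mul_sum,
      ← Finset.sum_add_distrib, ← Finset.sum_add_distrib]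
    exact Finset.sum_congr rfl fun i _ => by ring
  rw [hexp]
  nlinarith [mul_le_mul_of_nonneg_left hx (sq_nonneg a),
    mul_le_mul_of_nonneg_left hy (sq_nonneg a'),
    mul_le_mul_of_nonneg_left hH (by positivity : (0:ℝ) ≤ 2 * a * a')]

/-- If `v¹ ∈ K*`, then the sublevel set `[φ_A ≤ c]` is convex for every `c ∉ (λ₂, λₙ)`. -/
theorem stmt6 (n : ℕ) [NeZero n] (hn : 2 ≤ n)
    (K : Set (EuclideanSpace ℝ (Fin n))) (hK : IsProperCone K) (hsub : K ⊆ dualCone K)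
    (A : Matrix (Fin n) (Fin n) ℝ) (hA : A.IsSymm)
    (v : Fin n → EuclideanSpace ℝ (Fin n)) (hv : Orthonormal ℝ v)
    (lam : Fin n → ℝ) (heig : ∀ i, Matrix.toEuclideanLin A (v i) = lam i • v i)
    (hmono : Monotone lam) (h12 : lam 0 < lam 1)
    (hv1 : v 0 ∈ dualCone K) :
    ∀ c : ℝ, c ∉ Set.Ioo (lam 1) (lam ⟨n - 1, by omega⟩) → Convex ℝ (sublevel A K c) := by
  classical
  intro c hc
  -- an orthonormal basis out of `v`
  have hcard : Fintype.card (Fin n) = Module.finrank ℝ (EuclideanSpace ℝ (Fin n)) := by simp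
  have hne : Nonempty (Fin n) := ⟨0⟩
  let B : Module.Basis (Fin n) ℝ (EuclideanSpace ℝ (Fin n)) := basisOfOrthonormalOfCardEqFinrank hv hcard
  have hBcoe : ⇑B = v := coe_basisOfOrthonormalOfCardEqFinrank hv hcard
  let ob : OrthonormalBasis (Fin n) ℝ (EuclideanSpace ℝ (Fin n)) :=
    B.toOrthonormalBasis (by rwa [hBcoe])
  have hobc : ⇑ob = v := by
    rw [show ⇑ob = ⇑B from Module.Basis.coe_toOrthonormalBasis _ _, hBcoe]
  -- symmetry of the linear map
  have hHerm : A.IsHermitian := by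
    have := hA
    unfold Matrix.IsSymm at this
    ext i j
    rw [Matrix.conjTranspose_apply, star_trivial]
    exact congrFun (congrFun this i) j ▸ rfl
  have hsymA : (Matrix.toEuclideanLin A).IsSymmetric :=
    Matrix.isHermitian_iff_isSymmetric.mp hHerm
  -- quadratic form and norm in coordinates
  have hquad : ∀ w : EuclideanSpace ℝ (Fin n),
      quadForm A w = ∑ i, lam i * ⟪v i, w⟫ ^ 2 := by
    intro w
    have hs := ob.sum_inner_mul_inner (Matrix.toEuclideanLin A w) w
    rw [quadForm, ← hs]
    refine Finset.sum_congr rfl fun i _ => ?_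
    rw [hobc]
    have h1 : ⟪Matrix.toEuclideanLin A w, v i⟫ = lam i * ⟪v i, w⟫ := by
      rw [hsymA w (v i), heig i, real_inner_smul_right, real_inner_comm]
    rw [h1]; ring
  have hnorm : ∀ w : EuclideanSpace ℝ (Fin n), ‖w‖ ^ 2 = ∑ i, ⟪v i, w⟫ ^ 2 := by
    intro w
    have hs := ob.sum_inner_mul_inner w w
    rw [real_inner_self_eq_norm_sq] at hs
    rw [← hs]
    refine Finset.sum_congr rfl fun i _ => ?_
    rw [hobc, real_inner_comm w (v i)]; ring
  have hdiff : ∀ w : EuclideanSpace ℝ (Fin n),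
      quadForm A w - c * ‖w‖ ^ 2 = ∑ i, (lam i - c) * ⟪v i, w⟫ ^ 2 := by
    intro w
    rw [hquad w, hnorm w, Finset.mul_sum, ← Finset.sum_sub_distrib]
    exact Finset.sum_congr rfl fun i _ => by ring
  have key : ∀ w : EuclideanSpace ℝ (Fin n),
      (quadForm A w ≤ c * ‖w‖ ^ 2 ↔ ∑ i, (lam i - c) * ⟪v i, w⟫ ^ 2 ≤ 0) := by
    intro w
    rw [← sub_nonpos, hdiff w]
  have hconvInt : Convex ℝ (interior K) := hK.2.1.interior
  rcases (by
      rcases le_or_gt c (lam 1) with h | h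
      · exact Or.inl h
      · refine Or.inr ?_
        by_contra hlt
        exact hc ⟨h, lt_of_not_ge hlt⟩ :
      c ≤ lam 1 ∨ lam (⟨n - 1, by omega⟩ : Fin n) ≤ c) with hcle | hcge
  · -- case c ≤ lam 1
    have hsplit : ∀ w : EuclideanSpace ℝ (Fin n),
        ∑ i, (lam i - c) * ⟪v i, w⟫ ^ 2
          = (lam 0 - c) * ⟪v 0, w⟫ ^ 2
            + ∑ i ∈ Finset.univ.erase 0, (lam i - c) * ⟪v i, w⟫ ^ 2 :=
      fun w => (Finset.add_sum_erase _ _ (Finset.mem_univ 0)).symm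
    have hweight : ∀ i ∈ Finset.univ.erase (0 : Fin n), 0 ≤ lam i - c := by
      intro i hi
      have hne0 : i ≠ 0 := Finset.ne_of_mem_erase hi
      have h0 : i.val ≠ 0 := by
        intro h; exact hne0 (Fin.ext (by simp [h]))
      have h1i : (1 : Fin n) ≤ i := by
        rw [Fin.le_def, Fin.val_one']
        have hm : (1:ℕ) % n = 1 := Nat.mod_eq_of_lt (by omega)
        omega
      have := hmono h1i
      linarith
    intro x hx y hy a a' ha ha' hab
    obtain ⟨hxK, hxq⟩ := hx
    obtain ⟨hyK, hyq⟩ := hy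
    refine ⟨hconvInt hxK hyK ha ha' hab, ?_⟩
    rw [key, hsplit]
    have htlin : ∀ i : Fin n,
        ⟪v i, a • x + a' • y⟫ = a * ⟪v i, x⟫ + a' * ⟪v i, y⟫ := by
      intro i
      rw [inner_add_right, real_inner_smul_right, real_inner_smul_right]
    have hp : (0:ℝ) ≤ ⟪v 0, x⟫ := hv1 x (interior_subset hxK)
    have hq : (0:ℝ) ≤ ⟪v 0, y⟫ := hv1 y (interior_subset hyK)
    have hxq' : ∑ i ∈ Finset.univ.erase 0, (lam i - c) * ⟪v i, x⟫ ^ 2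
        ≤ (c - lam 0) * ⟪v 0, x⟫ ^ 2 := by
      have := (key x).mp hxq
      rw [hsplit x] at this
      linarith
    have hyq' : ∑ i ∈ Finset.univ.erase 0, (lam i - c) * ⟪v i, y⟫ ^ 2
        ≤ (c - lam 0) * ⟪v 0, y⟫ ^ 2 := by
      have := (key y).mp hyq
      rw [hsplit y] at this
      linarith
    have hmain := socAux (Finset.univ.erase (0 : Fin n)) (fun i => lam i - c)
      (fun i => ⟪v i, x⟫) (fun i => ⟪v i, y⟫) hweight (c - lam 0)
      ⟪v 0, x⟫ ⟪v 0, y⟫ a a' hp hq ha ha' hxq' hyq'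
    have e1 : ∑ i ∈ Finset.univ.erase 0, (lam i - c) * ⟪v i, a • x + a' • y⟫ ^ 2
        = ∑ i ∈ Finset.univ.erase 0, (lam i - c) * (a * ⟪v i, x⟫ + a' * ⟪v i, y⟫) ^ 2 :=
      Finset.sum_congr rfl fun i _ => by rw [htlin i]
    rw [e1, htlin 0]
    nlinarith [hmain]
  · -- case lam (n-1) ≤ c : sublevel set is all of interior K
    have hall : ∀ w : EuclideanSpace ℝ (Fin n), quadForm A w ≤ c * ‖w‖ ^ 2 := by
      intro w
      rw [key]
      refine Finset.sum_nonpos fun i _ => ?_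
      have hle : i ≤ (⟨n - 1, by omega⟩ : Fin n) := by
        rw [Fin.le_def]
        show i.val ≤ n - 1
        have := i.isLt
        omega
      have : lam i ≤ c := le_trans (hmono hle) hcge
      exact mul_nonpos_iff.mpr (Or.inr ⟨by linarith, sq_nonneg _⟩)
    have hsl : sublevel A K c = interior K := by
      ext w
      simp [sublevel, hall w]
    rw [hsl]
    exact hconvInt
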